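/- arXiv:2512.14590 — 2 statements merged into one kernel-verified Lean document; each statement's English description precedes it below -/
import Mathlib

section
/- Let V ⊂ ℝⁿ be a bounded, convex, open set, let 1 < s < 2 and 1 ≤ p < ∞. Define for a function u ∈ W^{s,p}(V; ℝᵐ) the remainder operator R^s u(x,y) := (u(y) − u(x) − Du(x)(y−x)) / |y−x|^s. Then the L^p-norm of R^s u with respect to the measure dμ(x,y) = dx dy / |y−x|ⁿ on V × V satisfies ‖R^s u‖_{L^p(V×V, μ)}^p ≤ (∫₀¹ t^{(s−1)p} dt) · [Du]_{W^{s−1,p}(V)}^p, where [Du]_{W^{s−1,p}} denotes the Gagliardo seminorm of Du of order s−1. -/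
open MeasureTheory
set_option maxHeartbeats 1000000
open scoped ENNReal NNReal

private lemma lintegral_rpow_le_of_prob {X : Type*} [MeasurableSpace X] (μ : Measure X)
    [IsProbabilityMeasure μ] {g : X → ℝ≥0∞} (hg : AEMeasurable g μ) {p : ℝ} (hp : 1 ≤ p) :
    (∫⁻ x, g x ∂μ) ^ p ≤ ∫⁻ x, g x ^ p ∂μ := by
  rcases eq_or_lt_of_le hp with h1 | h1
  · simp [← h1]
  · have hpq := Real.HolderConjugate.conjExponent h1
    have key : ∫⁻ x, g x ∂μ ≤ (∫⁻ x, g x ^ p ∂μ) ^ (1 / p) := by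
      calc ∫⁻ x, g x ∂μ = ∫⁻ x, g x * 1 ∂μ := by simp
        _ ≤ (∫⁻ x, g x ^ p ∂μ) ^ (1 / p) *
            (∫⁻ x, (1 : ℝ≥0∞) ^ Real.conjExponent p ∂μ) ^ (1 / Real.conjExponent p) :=
          ENNReal.lintegral_mul_le_Lp_mul_Lq μ hpq hg aemeasurable_const
        _ = (∫⁻ x, g x ^ p ∂μ) ^ (1 / p) := by simp
    calc (∫⁻ x, g x ∂μ) ^ p ≤ ((∫⁻ x, g x ^ p ∂μ) ^ (1 / p)) ^ p :=
        ENNReal.rpow_le_rpow key (by positivity)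
      _ = ∫⁻ x, g x ^ p ∂μ := by
        rw [← ENNReal.rpow_mul, one_div, inv_mul_cancel₀ (by positivity), ENNReal.rpow_one]

/-- Jensen/FTC estimate for the remainder operator
`R^s u(x,y) = (u(y) - u(x) - Du(x)(y-x)) / |y-x|^s` on a bounded convex open set `V ⊆ ℝⁿ`:
`‖R^s u‖_{L^p(V×V,μ)}^p ≤ (∫₀¹ t^{(s-1)p} dt) · [Du]_{W^{s-1,p}(V)}^p`,
where `dμ(x,y) = dx dy / |y-x|ⁿ`. -/
theorem remainder_operator_Lp_bound {n m : ℕ}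
    (V : Set (EuclideanSpace ℝ (Fin n)))
    (hVbdd : Bornology.IsBounded V) (hVconv : Convex ℝ V) (hVopen : IsOpen V)
    (s p : ℝ) (hs1 : 1 < s) (hs2 : s < 2) (hp1 : 1 ≤ p)
    (u : EuclideanSpace ℝ (Fin n) → EuclideanSpace ℝ (Fin m))
    (hu : ContDiffOn ℝ 1 u V) :
    (∫⁻ x in V, ∫⁻ y in V,
        (‖u y - u x - fderiv ℝ u x (y - x)‖₊ : ℝ≥0∞) ^ p
          / (‖y - x‖₊ : ℝ≥0∞) ^ (s * p + n))
      ≤ ENNReal.ofReal (∫ t in (0:ℝ)..1, t ^ ((s - 1) * p)) *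
        ∫⁻ x in V, ∫⁻ y in V,
          (‖fderiv ℝ u y - fderiv ℝ u x‖₊ : ℝ≥0∞) ^ p
            / (‖y - x‖₊ : ℝ≥0∞) ^ ((s - 1) * p + n) := by
  classical
  have hp0 : (0:ℝ) < p := lt_of_lt_of_le one_pos hp1
  have hβ : (0:ℝ) < (s - 1) * p := by nlinarith
  have hα0 : (0:ℝ) ≤ (s - 1) * p + n := by positivity
  have hVmeas : MeasurableSet V := hVopen.measurableSet
  set f := fderiv ℝ u with hfdef
  have hfmeas : Measurable f := measurable_fderiv ℝ u
  have hfcont : ContinuousOn f V := hu.continuousOn_fderiv_of_isOpen hVopen le_rfl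
  have hudiff : ∀ ⦃z⦄, z ∈ V → DifferentiableAt ℝ u z := fun z hz =>
    (hu.contDiffAt (hVopen.mem_nhds hz)).differentiableAt one_ne_zero
  haveI : IsProbabilityMeasure (volume.restrict (Set.Ioc (0:ℝ) 1)) :=
    ⟨by simp [Real.volume_Ioc]⟩
  -- Step 1: pointwise FTC + Jensen bound
  have step1 : ∀ x ∈ V, ∀ y ∈ V,
      (‖u y - u x - f x (y - x)‖₊ : ℝ≥0∞) ^ p / (‖y - x‖₊ : ℝ≥0∞) ^ (s * p + n)
        ≤ ∫⁻ t in Set.Ioc (0:ℝ) 1,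
            (‖f (x + t • (y - x)) - f x‖₊ : ℝ≥0∞) ^ p
              / (‖y - x‖₊ : ℝ≥0∞) ^ ((s - 1) * p + n) := by
    intro x hx y hy
    rcases eq_or_ne y x with rfl | hyx
    · simp [ENNReal.zero_rpow_of_pos hp0]
    · have hseg : ∀ t : ℝ, t ∈ Set.Icc (0:ℝ) 1 → x + t • (y - x) ∈ V := by
        intro t ht
        have he : x + t • (y - x) = (1 - t) • x + t • y := by module
        rw [he]
        exact hVconv hx hy (by linarith [ht.2]) ht.1 (by ring)
      have hγd : ∀ t : ℝ, HasDerivAt (fun τ : ℝ => x + τ • (y - x)) (y - x) t := by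
        intro t
        simpa using ((hasDerivAt_id t).smul_const (y - x)).const_add x
      have hcd : ∀ t ∈ Set.uIcc (0:ℝ) 1,
          HasDerivAt (fun τ : ℝ => u (x + τ • (y - x))) ((f (x + t • (y - x))) (y - x)) t := by
        intro t ht
        rw [Set.uIcc_of_le zero_le_one] at ht
        exact (hudiff (hseg t ht)).hasFDerivAt.comp_hasDerivAt t (hγd t)
      have hcont2 : ContinuousOn (fun t : ℝ => (f (x + t • (y - x))) (y - x))
          (Set.Icc (0:ℝ) 1) := by
        have hc : ContinuousOn (fun t : ℝ => f (x + t • (y - x))) (Set.Icc (0:ℝ) 1) :=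
          hfcont.comp (by fun_prop) hseg
        exact hc.clm_apply continuousOn_const
      have hcont2' : ContinuousOn (fun t : ℝ => (f (x + t • (y - x))) (y - x))
          (Set.uIcc (0:ℝ) 1) := by rwa [Set.uIcc_of_le zero_le_one]
      have hint : IntervalIntegrable (fun t : ℝ => (f (x + t • (y - x))) (y - x)) volume 0 1 :=
        hcont2'.intervalIntegrable
      have hFTC : ∫ t in (0:ℝ)..1, (f (x + t • (y - x))) (y - x) = u y - u x := by
        have h := intervalIntegral.integral_eq_sub_of_hasDerivAt hcd hint
        simpa using h
      have hkey : u y - u x - f x (y - x)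
          = ∫ t in Set.Ioc (0:ℝ) 1, ((f (x + t • (y - x)) - f x) (y - x)) := by
        rw [← intervalIntegral.integral_of_le zero_le_one]
        have h2 : (∫ t in (0:ℝ)..1, ((f (x + t • (y - x)) - f x) (y - x)))
            = (∫ t in (0:ℝ)..1, (f (x + t • (y - x))) (y - x))
              - ∫ t in (0:ℝ)..1, (f x) (y - x) := by
          simp_rw [ContinuousLinearMap.sub_apply]
          exact intervalIntegral.integral_sub hint intervalIntegrable_const
        rw [h2, hFTC, intervalIntegral.integral_const]
        simp
      have hnn : (‖u y - u x - f x (y - x)‖₊ : ℝ≥0∞)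
          ≤ ∫⁻ t in Set.Ioc (0:ℝ) 1,
              (‖f (x + t • (y - x)) - f x‖₊ : ℝ≥0∞) * (‖y - x‖₊ : ℝ≥0∞) := by
        rw [hkey]
        refine le_trans (enorm_integral_le_lintegral_enorm _) (lintegral_mono fun t => ?_)
        rw [← ENNReal.coe_mul]
        exact ENNReal.coe_le_coe.mpr
          (ContinuousLinearMap.le_opNNNorm (f (x + t • (y - x)) - f x) (y - x))
      have hmg : AEMeasurable
          (fun t : ℝ => (‖f (x + t • (y - x)) - f x‖₊ : ℝ≥0∞) * (‖y - x‖₊ : ℝ≥0∞))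
          (volume.restrict (Set.Ioc (0:ℝ) 1)) := by
        refine Measurable.aemeasurable ?_
        have h1 : Measurable fun t : ℝ => f (x + t • (y - x)) :=
          hfmeas.comp (by fun_prop)
        exact ((h1.sub measurable_const).nnnorm.coe_nnreal_ennreal).mul_const _
      have hjensen : (‖u y - u x - f x (y - x)‖₊ : ℝ≥0∞) ^ p
          ≤ ∫⁻ t in Set.Ioc (0:ℝ) 1,
              ((‖f (x + t • (y - x)) - f x‖₊ : ℝ≥0∞) * (‖y - x‖₊ : ℝ≥0∞)) ^ p :=
        le_trans (ENNReal.rpow_le_rpow hnn hp0.le) (lintegral_rpow_le_of_prob _ hmg hp1)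
      set r : ℝ≥0∞ := (‖y - x‖₊ : ℝ≥0∞) with hrdef
      have hr0 : r ≠ 0 := by
        simp [hrdef, nnnorm_eq_zero, sub_eq_zero, hyx]
      have hrt : r ≠ ⊤ := ENNReal.coe_ne_top
      have hrp_ne_top : r ^ p ≠ ⊤ := ENNReal.rpow_ne_top_of_nonneg hp0.le hrt
      have hrpos : 0 < r := zero_lt_iff.mpr hr0
      have hrα_ne_zero : r ^ ((s - 1) * p + n) ≠ 0 := (ENNReal.rpow_pos hrpos hrt).ne'
      have hrp_ne_zero : r ^ p ≠ 0 := (ENNReal.rpow_pos hrpos hrt).ne'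
      have hdiv : (∫⁻ t in Set.Ioc (0:ℝ) 1,
            ((‖f (x + t • (y - x)) - f x‖₊ : ℝ≥0∞) * r) ^ p) / r ^ (s * p + ↑n)
          = ∫⁻ t in Set.Ioc (0:ℝ) 1,
              (‖f (x + t • (y - x)) - f x‖₊ : ℝ≥0∞) ^ p / r ^ ((s - 1) * p + ↑n) := by
        have hmul : ∀ t : ℝ, ((‖f (x + t • (y - x)) - f x‖₊ : ℝ≥0∞) * r) ^ p
            = (‖f (x + t • (y - x)) - f x‖₊ : ℝ≥0∞) ^ p * r ^ p := fun t =>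
          ENNReal.mul_rpow_of_nonneg _ _ hp0.le
        simp_rw [hmul, div_eq_mul_inv]
        rw [lintegral_mul_const' _ _ hrp_ne_top,
          lintegral_mul_const' _ _ (by simpa using hrα_ne_zero)]
        rw [mul_assoc]
        congr 1
        have hsp : r ^ (s * p + ↑n) = r ^ ((s - 1) * p + ↑n) * r ^ p := by
          rw [← ENNReal.rpow_add _ _ hr0 hrt]
          ring_nf
        rw [hsp, ENNReal.mul_inv (Or.inl hrα_ne_zero)
          (Or.inl (ENNReal.rpow_ne_top_of_nonneg hα0 hrt)), ← mul_assoc, mul_right_comm,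
          ENNReal.mul_inv_cancel hrp_ne_zero hrp_ne_top, one_mul]
      calc (‖u y - u x - f x (y - x)‖₊ : ℝ≥0∞) ^ p / r ^ (s * p + ↑n)
          ≤ (∫⁻ t in Set.Ioc (0:ℝ) 1,
              ((‖f (x + t • (y - x)) - f x‖₊ : ℝ≥0∞) * r) ^ p) / r ^ (s * p + ↑n) :=
            ENNReal.div_le_div_right hjensen _
        _ = _ := hdiv
  -- measurability of G-type functions
  have hGmeas : ∀ x : EuclideanSpace ℝ (Fin n), Measurable fun z : EuclideanSpace ℝ (Fin n) =>
      (‖f z - f x‖₊ : ℝ≥0∞) ^ p / (‖z - x‖₊ : ℝ≥0∞) ^ ((s - 1) * p + n) := by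
    intro x
    refine Measurable.div ?_ ?_
    · exact ((hfmeas.sub measurable_const).nnnorm.coe_nnreal_ennreal).pow_const _
    · exact (((measurable_id.sub measurable_const)).nnnorm.coe_nnreal_ennreal).pow_const _
  -- Step 2: for fixed x, swap and substitute
  have step2 : ∀ x ∈ V,
      (∫⁻ y in V, ∫⁻ t in Set.Ioc (0:ℝ) 1,
          (‖f (x + t • (y - x)) - f x‖₊ : ℝ≥0∞) ^ p
            / (‖y - x‖₊ : ℝ≥0∞) ^ ((s - 1) * p + n))
        ≤ ENNReal.ofReal (∫ t in (0:ℝ)..1, t ^ ((s - 1) * p)) *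
          ∫⁻ z in V, (‖f z - f x‖₊ : ℝ≥0∞) ^ p / (‖z - x‖₊ : ℝ≥0∞) ^ ((s - 1) * p + n) := by
    intro x hx
    have hFmeas : Measurable (Function.uncurry fun (y : EuclideanSpace ℝ (Fin n)) (t : ℝ) =>
        (‖f (x + t • (y - x)) - f x‖₊ : ℝ≥0∞) ^ p
          / (‖y - x‖₊ : ℝ≥0∞) ^ ((s - 1) * p + n)) := by
      refine Measurable.div ?_ ?_
      · have h1 : Measurable fun q : EuclideanSpace ℝ (Fin n) × ℝ =>
            f (x + q.2 • (q.1 - x)) := hfmeas.comp (by fun_prop)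
        exact ((h1.sub measurable_const).nnnorm.coe_nnreal_ennreal).pow_const _
      · exact (((measurable_fst.sub measurable_const)).nnnorm.coe_nnreal_ennreal).pow_const _
    rw [lintegral_lintegral_swap hFmeas.aemeasurable]
    have hsub : ∀ t ∈ Set.Ioc (0:ℝ) 1,
        (∫⁻ y in V, (‖f (x + t • (y - x)) - f x‖₊ : ℝ≥0∞) ^ p
            / (‖y - x‖₊ : ℝ≥0∞) ^ ((s - 1) * p + n))
          ≤ ENNReal.ofReal (t ^ ((s - 1) * p)) *
            ∫⁻ z in V, (‖f z - f x‖₊ : ℝ≥0∞) ^ p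
              / (‖z - x‖₊ : ℝ≥0∞) ^ ((s - 1) * p + n) := by
      intro t ht
      have ht0 : (0:ℝ) < t := ht.1
      have htn : ((t:ℝ) ^ n) ≠ 0 := by positivity
      set c : EuclideanSpace ℝ (Fin n) := x - t • x with hc
      have hTdef : ∀ y : EuclideanSpace ℝ (Fin n), x + t • (y - x) = c + t • y := by
        intro y; rw [hc]; module
      set G : EuclideanSpace ℝ (Fin n) → ℝ≥0∞ := fun z =>
        (‖f z - f x‖₊ : ℝ≥0∞) ^ p / (‖z - x‖₊ : ℝ≥0∞) ^ ((s - 1) * p + n) with hG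
      have hGm : Measurable G := hGmeas x
      have hcα0 : ENNReal.ofReal (t ^ ((s - 1) * p + ↑n)) ≠ 0 :=
        (ENNReal.ofReal_pos.mpr (Real.rpow_pos_of_pos ht0 _)).ne'
      have hpt : ∀ y : EuclideanSpace ℝ (Fin n),
          (‖f (x + t • (y - x)) - f x‖₊ : ℝ≥0∞) ^ p
              / (‖y - x‖₊ : ℝ≥0∞) ^ ((s - 1) * p + n)
            = ENNReal.ofReal (t ^ ((s - 1) * p + ↑n)) * G (x + t • (y - x)) := by
        intro y
        have hzx : (‖(x + t • (y - x)) - x‖₊ : ℝ≥0∞)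
            = ENNReal.ofReal t * (‖y - x‖₊ : ℝ≥0∞) := by
          have h3 : (x + t • (y - x)) - x = t • (y - x) := by abel
          rw [h3, nnnorm_smul, ENNReal.coe_mul]
          congr 1
          rw [Real.nnnorm_of_nonneg ht0.le]
          simp [ENNReal.ofReal, Real.toNNReal_of_nonneg ht0.le]
        have : G (x + t • (y - x))
            = (‖f (x + t • (y - x)) - f x‖₊ : ℝ≥0∞) ^ p
              / (ENNReal.ofReal (t ^ ((s - 1) * p + ↑n))
                * (‖y - x‖₊ : ℝ≥0∞) ^ ((s - 1) * p + n)) := by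
          simp only [hG]
          rw [hzx, ENNReal.mul_rpow_of_nonneg _ _ hα0,
            ENNReal.ofReal_rpow_of_pos ht0]
        rw [this, ← mul_div_assoc,
          ENNReal.mul_div_mul_left _ _ hcα0 ENNReal.ofReal_ne_top]
      have hTinj : Function.Injective (fun y : EuclideanSpace ℝ (Fin n) => c + t • y) := by
        intro a b hab
        simp only at hab
        exact smul_right_injective _ ht0.ne' (add_left_cancel hab)
      have hTV_open : IsOpen ((fun y : EuclideanSpace ℝ (Fin n) => c + t • y) '' V) := by
        have h4 : (fun y : EuclideanSpace ℝ (Fin n) => c + t • y) '' V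
            = (fun w => c + w) '' ((fun y : EuclideanSpace ℝ (Fin n) => t • y) '' V) := by
          rw [← Set.image_comp]; rfl
        rw [h4]
        exact (isOpenMap_add_left c) _ (isOpenMap_smul₀ ht0.ne' V hVopen)
      have hTVsub : (fun y : EuclideanSpace ℝ (Fin n) => c + t • y) '' V ⊆ V := by
        rintro _ ⟨y, hy, rfl⟩
        show c + t • y ∈ V
        have h5 : c + t • y = (1 - t) • x + t • y := by rw [hc]; module
        rw [h5]
        exact hVconv hx hy (by linarith [ht.2]) ht0.le (by ring)
      have hTmeas : Measurable (fun y : EuclideanSpace ℝ (Fin n) => c + t • y) := by fun_prop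
      have hmapT : Measure.map (fun y : EuclideanSpace ℝ (Fin n) => c + t • y) volume
          = (ENNReal.ofReal ((t ^ n)⁻¹)) • volume := by
        have h6 : (fun y : EuclideanSpace ℝ (Fin n) => c + t • y)
            = (fun w => c + w) ∘ (fun y : EuclideanSpace ℝ (Fin n) => t • y) := rfl
        rw [h6, ← Measure.map_map (measurable_const_add c) (measurable_const_smul t),
          Measure.map_addHaar_smul volume ht0.ne', Measure.map_smul, map_add_left_eq_self]
        congr 1
        rw [finrank_euclideanSpace_fin, abs_of_pos (by positivity)]
      set K := Set.indicator ((fun y : EuclideanSpace ℝ (Fin n) => c + t • y) '' V) G with hK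
      have hKmeas : Measurable K := hGm.indicator hTV_open.measurableSet
      have hind : ∀ y : EuclideanSpace ℝ (Fin n),
          Set.indicator V (fun y => G (c + t • y)) y = K (c + t • y) := by
        intro y
        by_cases hy : y ∈ V
        · rw [Set.indicator_of_mem hy, hK, Set.indicator_of_mem (Set.mem_image_of_mem _ hy)]
        · rw [Set.indicator_of_notMem hy, hK, Set.indicator_of_notMem]
          rintro ⟨y', hy', he⟩
          exact hy (hTinj he ▸ hy')
      have hchange : (∫⁻ y in V, G (x + t • (y - x)))
          ≤ ENNReal.ofReal ((t ^ n)⁻¹) * ∫⁻ z in V, G z := by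
        calc ∫⁻ y in V, G (x + t • (y - x))
            = ∫⁻ y in V, G (c + t • y) := by simp_rw [hTdef]
          _ = ∫⁻ y, Set.indicator V (fun y => G (c + t • y)) y := by
              rw [lintegral_indicator hVmeas]
          _ = ∫⁻ y, K (c + t • y) := by simp_rw [hind]
          _ = ∫⁻ w, K w ∂(Measure.map (fun y : EuclideanSpace ℝ (Fin n) => c + t • y) volume) :=
              (lintegral_map hKmeas hTmeas).symm
          _ = ENNReal.ofReal ((t ^ n)⁻¹) * ∫⁻ w, K w := by
              rw [hmapT, lintegral_smul_measure, smul_eq_mul]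
          _ = ENNReal.ofReal ((t ^ n)⁻¹)
              * ∫⁻ w in (fun y : EuclideanSpace ℝ (Fin n) => c + t • y) '' V, G w := by
              rw [hK, lintegral_indicator hTV_open.measurableSet]
          _ ≤ ENNReal.ofReal ((t ^ n)⁻¹) * ∫⁻ z in V, G z :=
              mul_le_mul_right (lintegral_mono_set hTVsub) _
      have hcoef : ENNReal.ofReal (t ^ ((s - 1) * p + ↑n)) * ENNReal.ofReal ((t ^ n)⁻¹)
          = ENNReal.ofReal (t ^ ((s - 1) * p)) := by
        rw [← ENNReal.ofReal_mul (by positivity)]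
        congr 1
        rw [Real.rpow_add ht0, Real.rpow_natCast]
        field_simp
      calc (∫⁻ y in V,
            (‖f (x + t • (y - x)) - f x‖₊ : ℝ≥0∞) ^ p
              / (‖y - x‖₊ : ℝ≥0∞) ^ ((s - 1) * p + n))
          = ∫⁻ y in V, ENNReal.ofReal (t ^ ((s - 1) * p + ↑n)) * G (x + t • (y - x)) :=
            lintegral_congr fun y => hpt y
        _ = ENNReal.ofReal (t ^ ((s - 1) * p + ↑n)) * ∫⁻ y in V, G (x + t • (y - x)) :=
            lintegral_const_mul' _ _ ENNReal.ofReal_ne_top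
        _ ≤ ENNReal.ofReal (t ^ ((s - 1) * p + ↑n))
            * (ENNReal.ofReal ((t ^ n)⁻¹) * ∫⁻ z in V, G z) :=
            mul_le_mul_right hchange _
        _ = ENNReal.ofReal (t ^ ((s - 1) * p)) * ∫⁻ z in V, G z := by
            rw [← mul_assoc, hcoef]
    have hconst : (∫⁻ t in Set.Ioc (0:ℝ) 1, ENNReal.ofReal (t ^ ((s - 1) * p)))
        = ENNReal.ofReal (∫ t in (0:ℝ)..1, t ^ ((s - 1) * p)) := by
      rw [intervalIntegral.integral_of_le zero_le_one]
      rw [ofReal_integral_eq_lintegral_ofReal]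
      · exact (intervalIntegrable_iff_integrableOn_Ioc_of_le zero_le_one).mp
          (intervalIntegral.intervalIntegrable_rpow' (by linarith))
      · exact (ae_restrict_mem measurableSet_Ioc).mono fun t ht =>
          Real.rpow_nonneg ht.1.le _
    calc (∫⁻ t in Set.Ioc (0:ℝ) 1, ∫⁻ y in V,
          (‖f (x + t • (y - x)) - f x‖₊ : ℝ≥0∞) ^ p
            / (‖y - x‖₊ : ℝ≥0∞) ^ ((s - 1) * p + n))
        ≤ ∫⁻ t in Set.Ioc (0:ℝ) 1, ENNReal.ofReal (t ^ ((s - 1) * p)) *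
            ∫⁻ z in V, (‖f z - f x‖₊ : ℝ≥0∞) ^ p
              / (‖z - x‖₊ : ℝ≥0∞) ^ ((s - 1) * p + n) :=
          lintegral_mono_ae ((ae_restrict_mem measurableSet_Ioc).mono fun t ht => hsub t ht)
      _ = (∫⁻ t in Set.Ioc (0:ℝ) 1, ENNReal.ofReal (t ^ ((s - 1) * p))) *
            ∫⁻ z in V, (‖f z - f x‖₊ : ℝ≥0∞) ^ p
              / (‖z - x‖₊ : ℝ≥0∞) ^ ((s - 1) * p + n) :=
          lintegral_mul_const _ ((measurable_id.pow_const _).ennreal_ofReal)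
      _ = _ := by rw [hconst]
  -- assemble
  calc (∫⁻ x in V, ∫⁻ y in V,
        (‖u y - u x - f x (y - x)‖₊ : ℝ≥0∞) ^ p / (‖y - x‖₊ : ℝ≥0∞) ^ (s * p + n))
      ≤ ∫⁻ x in V, ∫⁻ y in V, ∫⁻ t in Set.Ioc (0:ℝ) 1,
          (‖f (x + t • (y - x)) - f x‖₊ : ℝ≥0∞) ^ p
            / (‖y - x‖₊ : ℝ≥0∞) ^ ((s - 1) * p + n) :=
        lintegral_mono_ae ((ae_restrict_mem hVmeas).mono fun x hx =>
          lintegral_mono_ae ((ae_restrict_mem hVmeas).mono fun y hy => step1 x hx y hy))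
    _ ≤ ∫⁻ x in V, ENNReal.ofReal (∫ t in (0:ℝ)..1, t ^ ((s - 1) * p)) *
          ∫⁻ z in V, (‖f z - f x‖₊ : ℝ≥0∞) ^ p
            / (‖z - x‖₊ : ℝ≥0∞) ^ ((s - 1) * p + n) :=
        lintegral_mono_ae ((ae_restrict_mem hVmeas).mono fun x hx => step2 x hx)
    _ = ENNReal.ofReal (∫ t in (0:ℝ)..1, t ^ ((s - 1) * p)) *
          ∫⁻ x in V, ∫⁻ y in V,
            (‖f y - f x‖₊ : ℝ≥0∞) ^ p / (‖y - x‖₊ : ℝ≥0∞) ^ ((s - 1) * p + n) :=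
        lintegral_const_mul' _ _ ENNReal.ofReal_ne_top
end

section
/- Let M be a compact manifold, f, f₀: M → ℝᵐ two C¹ embeddings, and for 1 < s < 2 define the remainder operator R^s_f u(x,y) := (u(y) − u(x) − D_f u(x)(f(y) − f(x))) / |f(y) − f(x)|^s, where D_f u(x) := du(x) df(x)^†. Then with Λ_f(x,y) := |f₀(y) − f₀(x)| / |f(y) − f(x)|, the transformation identity R^s_f u(x,y) = Λ_f(x,y)^s · ( R^s_{f₀} u(x,y) − D_f u(x) · R^s_{f₀} f(x,y) ) holds for all x ≠ y. -/
open scoped Manifold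

/- The Moore–Penrose pseudoinverse `L† = (L* L)⁻¹ L*` of a linear map between
finite-dimensional real inner product spaces. -/
open Classical in
noncomputable def pinv {E F : Type*}
    [NormedAddCommGroup E] [InnerProductSpace ℝ E] [FiniteDimensional ℝ E]
    [NormedAddCommGroup F] [InnerProductSpace ℝ F] [FiniteDimensional ℝ F]
    (L : E →ₗ[ℝ] F) : F →ₗ[ℝ] E :=
  if h : Function.Bijective (LinearMap.adjoint L ∘ₗ L) then
    (LinearEquiv.ofBijective (LinearMap.adjoint L ∘ₗ L) h).symm.toLinearMap ∘ₗ
      LinearMap.adjoint L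
  else 0

/-- The differential `df(x) : T_xM → ℝᵐ` of `f : M → ℝᵐ`, viewed as a linear map on the
model space. -/
noncomputable def mder (n : ℕ) {m : ℕ} {M : Type*} [TopologicalSpace M]
    [ChartedSpace (EuclideanSpace ℝ (Fin n)) M]
    (f : M → EuclideanSpace ℝ (Fin m)) (x : M) :
    EuclideanSpace ℝ (Fin n) →L[ℝ] EuclideanSpace ℝ (Fin m) :=
  mfderiv (𝓘(ℝ, EuclideanSpace ℝ (Fin n))) (𝓘(ℝ, EuclideanSpace ℝ (Fin m))) f x

/-- The pulled-back differential `D_f u(x) := du(x) ∘ df(x)†`. -/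
noncomputable def Dop (n : ℕ) {m k : ℕ} {M : Type*} [TopologicalSpace M]
    [ChartedSpace (EuclideanSpace ℝ (Fin n)) M]
    (f : M → EuclideanSpace ℝ (Fin m)) (u : M → EuclideanSpace ℝ (Fin k)) (x : M) :
    EuclideanSpace ℝ (Fin m) →ₗ[ℝ] EuclideanSpace ℝ (Fin k) :=
  (mder n u x).toLinearMap ∘ₗ pinv (mder n f x).toLinearMap



lemma pinv_comp_self {E F : Type*}
    [NormedAddCommGroup E] [InnerProductSpace ℝ E] [FiniteDimensional ℝ E]
    [NormedAddCommGroup F] [InnerProductSpace ℝ F] [FiniteDimensional ℝ F]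
    (L : E →ₗ[ℝ] F) (hL : Function.Injective L) :
    pinv L ∘ₗ L = LinearMap.id := by
  have hinj : Function.Injective (LinearMap.adjoint L ∘ₗ L) := by
    intro v w h
    have h3 : (LinearMap.adjoint L ∘ₗ L) (v - w) = 0 := by simp [map_sub, h]
    have h4 : (inner ℝ (L (v - w)) (L (v - w)) : ℝ) = 0 := by
      have h3' : (inner ℝ ((LinearMap.adjoint L) (L (v - w))) (v - w) : ℝ) = 0 := by
        rw [← LinearMap.comp_apply, h3, inner_zero_left]
      rwa [LinearMap.adjoint_inner_left] at h3' 
    have h5 : L (v - w) = 0 := inner_self_eq_zero.mp h4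
    have := hL (show L (v - w) = L 0 by simpa using h5)
    exact sub_eq_zero.mp this
  have hb : Function.Bijective (LinearMap.adjoint L ∘ₗ L) :=
    ⟨hinj, (LinearMap.injective_iff_surjective).mp hinj⟩
  classical
  ext v
  rw [LinearMap.comp_apply, LinearMap.id_apply]
  simp only [pinv, dif_pos hb]
  exact (LinearEquiv.ofBijective _ hb).symm_apply_apply v

/-- Transformation identity for the remainder operator
`R^s_f u(x,y) = (u(y) - u(x) - D_f u(x)(f(y) - f(x))) / |f(y) - f(x)|^s`:
with `Λ_f(x,y) = |f₀(y) - f₀(x)| / |f(y) - f(x)|`, one has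
`R^s_f u(x,y) = Λ_f(x,y)^s · (R^s_{f₀} u(x,y) - D_f u(x) (R^s_{f₀} f(x,y)))` for `x ≠ y`. -/
theorem remainder_operator_transformation {n m k : ℕ} {M : Type*} [TopologicalSpace M]
    [ChartedSpace (EuclideanSpace ℝ (Fin n)) M]
    [IsManifold (𝓘(ℝ, EuclideanSpace ℝ (Fin n))) (⊤ : ℕ∞) M]
    [CompactSpace M]
    (f f₀ : M → EuclideanSpace ℝ (Fin m)) (u : M → EuclideanSpace ℝ (Fin k))
    (hf : MDifferentiable (𝓘(ℝ, EuclideanSpace ℝ (Fin n)))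
      (𝓘(ℝ, EuclideanSpace ℝ (Fin m))) f)
    (hf₀ : MDifferentiable (𝓘(ℝ, EuclideanSpace ℝ (Fin n)))
      (𝓘(ℝ, EuclideanSpace ℝ (Fin m))) f₀)
    (hfinj : Function.Injective f) (hf₀inj : Function.Injective f₀)
    (hfimm : ∀ x : M, Function.Injective (mder n f x))
    (hf₀imm : ∀ x : M, Function.Injective (mder n f₀ x))
    (hu : MDifferentiable (𝓘(ℝ, EuclideanSpace ℝ (Fin n)))
      (𝓘(ℝ, EuclideanSpace ℝ (Fin k))) u)
    (s : ℝ) (hs1 : 1 < s) (hs2 : s < 2)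
    (x y : M) (hxy : x ≠ y) :
    (‖f y - f x‖ ^ s)⁻¹ • (u y - u x - Dop n f u x (f y - f x)) =
      ((‖f₀ y - f₀ x‖ / ‖f y - f x‖) ^ s) •
        ((‖f₀ y - f₀ x‖ ^ s)⁻¹ • (u y - u x - Dop n f₀ u x (f₀ y - f₀ x)) -
          Dop n f u x
            ((‖f₀ y - f₀ x‖ ^ s)⁻¹ • (f y - f x - Dop n f₀ f x (f₀ y - f₀ x)))) := by
  have hfa : f y ≠ f x := fun h => hxy (hfinj h).symm
  have hf0a : f₀ y ≠ f₀ x := fun h => hxy (hf₀inj h).symm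
  have ha : (0:ℝ) < ‖f y - f x‖ := by simpa [sub_eq_zero] using hfa
  have hb : (0:ℝ) < ‖f₀ y - f₀ x‖ := by simpa [sub_eq_zero] using hf0a
  set a := ‖f y - f x‖
  set b := ‖f₀ y - f₀ x‖
  have has : a ^ s ≠ 0 := (Real.rpow_pos_of_pos ha s).ne'
  have hbs : b ^ s ≠ 0 := (Real.rpow_pos_of_pos hb s).ne'
  have key : ∀ w, Dop n f u x (Dop n f₀ f x w) = Dop n f₀ u x w := by
    intro w
    have hp : pinv (mder n f x).toLinearMap ∘ₗ (mder n f x).toLinearMap =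
        LinearMap.id := pinv_comp_self _ (hfimm x)
    have := congrArg (fun (T : _ →ₗ[ℝ] _) =>
      T (pinv (mder n f₀ x).toLinearMap w)) hp
    simp only [LinearMap.comp_apply, LinearMap.id_apply] at this
    simp only [Dop, LinearMap.comp_apply, ContinuousLinearMap.coe_coe] at *
    rw [this]
  have hscal : (b / a) ^ s * (b ^ s)⁻¹ = (a ^ s)⁻¹ := by
    rw [Real.div_rpow hb.le ha.le]
    field_simp
  have hB : Dop n f u x (f y - f x - Dop n f₀ f x (f₀ y - f₀ x))
      = Dop n f u x (f y - f x) - Dop n f₀ u x (f₀ y - f₀ x) := by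
    rw [map_sub, key]
  rw [map_smul, hB, ← smul_sub ((b ^ s)⁻¹), smul_smul, hscal]
  congr 1
  abel
end
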